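/- Assume equations (4mu′) and (dkq) hold, and let μ_1, …, μ_{2g} be arbitrary real constants. Define, for nonzero ξ ≠ η: μ(ξ, η) = 4ξ⁻¹ + 4η⁻¹ + 2∑_{i=1}^g μ_{2i} ξ^i η^i + ∑_{i=0}^{g−1} μ_{2i+1}(ξ + η)ξ^i η^i; Q(ξ, η) = 𝐮'(ξ)𝐮'(η) + (2 − 𝐮(ξ))𝐮''(η) + 𝐮''(ξ)(2 − 𝐮(η)) + 2(2 − 𝐮(ξ))(2 − 𝐮(η))(ξ⁻¹ + η⁻¹ + 2u_1); and P(ξ, η) = (ξ²η²/(4(ξ − η)²))·(2μ(ξ, η) − Q(ξ, η)). Then for all pairwise distinct nonzero real ξ, η, ζ and all t ∈ ℝ^g: ∂(ζ)P(ξ, η) = ∂(ξ)P(ζ, η), where ∂(ζ) = ∑_{i=1}^g ζ^i ∂_i. -/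

import Mathlib

open scoped BigOperators

/-- Partial derivative `∂_i` (1-based index) on functions of `t : Fin g → ℝ`;
`∂_i ≡ 0` for `i = 0` or `i > g` (in particular `∂_{g+1} ≡ 0`). -/
noncomputable def pd {g : ℕ} {E : Type*} [NormedAddCommGroup E] [NormedSpace ℝ E]
    (i : ℕ) (f : (Fin g → ℝ) → E) : (Fin g → ℝ) → E :=
  fun t => if h : 1 ≤ i ∧ i ≤ g then
    fderiv ℝ f t (Pi.single (⟨i - 1, by omega⟩ : Fin g) 1) else 0

/-- The generating function `𝐮(ξ) = ∑_{i=1}^g u_i ξ^i`. -/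
noncomputable def bfu {g : ℕ} (u : ℕ → (Fin g → ℝ) → ℝ) (ξ : ℝ) :
    (Fin g → ℝ) → ℝ :=
  fun t => ∑ i ∈ Finset.Icc 1 g, u i t * ξ ^ i

/-- `𝐮'(ξ) = ∑_{i=1}^g u_i' ξ^i` (prime is `∂_x = ∂_1`). -/
noncomputable def bfu1 {g : ℕ} (u : ℕ → (Fin g → ℝ) → ℝ) (ξ : ℝ) :
    (Fin g → ℝ) → ℝ :=
  fun t => ∑ i ∈ Finset.Icc 1 g, pd 1 (u i) t * ξ ^ i

/-- `𝐮''(ξ) = ∑_{i=1}^g u_i'' ξ^i`. -/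
noncomputable def bfu2 {g : ℕ} (u : ℕ → (Fin g → ℝ) → ℝ) (ξ : ℝ) :
    (Fin g → ℝ) → ℝ :=
  fun t => ∑ i ∈ Finset.Icc 1 g, pd 1 (pd 1 (u i)) t * ξ ^ i

/-- `𝐮'''(ξ) = ∑_{i=1}^g u_i''' ξ^i`. -/
noncomputable def bfu3 {g : ℕ} (u : ℕ → (Fin g → ℝ) → ℝ) (ξ : ℝ) :
    (Fin g → ℝ) → ℝ :=
  fun t => ∑ i ∈ Finset.Icc 1 g, pd 1 (pd 1 (pd 1 (u i))) t * ξ ^ i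

/-- `D_k(2 − 𝐮(ξ)) = (1/2)(2·ξ^{1−k} + ∑_{i=1}^{k−1} (−u_i) ξ^{i−k+1})`,
the operator `D_k` applied to the Laurent-type polynomial `2 − 𝐮(ξ)`. -/
noncomputable def DkA {g : ℕ} (u : ℕ → (Fin g → ℝ) → ℝ) (k : ℕ) (ξ : ℝ) :
    (Fin g → ℝ) → ℝ :=
  fun t => (1/2 : ℝ) * (2 * ξ ^ (1 - (k:ℤ))
    + ∑ i ∈ Finset.Icc 1 (k-1), (-(u i t)) * ξ ^ ((i:ℤ) - (k:ℤ) + 1))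

/-- `D_k(𝐮'(ξ)) = (1/2)∑_{i=1}^{k−1} u_i' ξ^{i−k+1}`. -/
noncomputable def DkB {g : ℕ} (u : ℕ → (Fin g → ℝ) → ℝ) (k : ℕ) (ξ : ℝ) :
    (Fin g → ℝ) → ℝ :=
  fun t => (1/2 : ℝ) * ∑ i ∈ Finset.Icc 1 (k-1), pd 1 (u i) t * ξ ^ ((i:ℤ) - (k:ℤ) + 1)

/-- The polarization `μ(ξ, η) = 4ξ⁻¹ + 4η⁻¹ + 2∑_{i=1}^g μ_{2i} ξ^i η^i +
∑_{i=0}^{g−1} μ_{2i+1}(ξ + η)ξ^i η^i` of `μ(ξ)`. -/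
noncomputable def muP (g : ℕ) (μ : ℕ → ℝ) (ξ η : ℝ) : ℝ :=
  4 * ξ⁻¹ + 4 * η⁻¹ + 2 * ∑ i ∈ Finset.Icc 1 g, μ (2*i) * ξ ^ i * η ^ i
    + ∑ i ∈ Finset.range g, μ (2*i+1) * (ξ + η) * ξ ^ i * η ^ i

/-- `Q(ξ, η) = 𝐮'(ξ)𝐮'(η) + (2 − 𝐮(ξ))𝐮''(η) + 𝐮''(ξ)(2 − 𝐮(η)) +
2(2 − 𝐮(ξ))(2 − 𝐮(η))(ξ⁻¹ + η⁻¹ + 2u_1)`, a polarization of the left-hand side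
of equation (4mu). -/
noncomputable def Qpol {g : ℕ} (u : ℕ → (Fin g → ℝ) → ℝ) (ξ η : ℝ) :
    (Fin g → ℝ) → ℝ :=
  fun t => bfu1 u ξ t * bfu1 u η t + (2 - bfu u ξ t) * bfu2 u η t
    + bfu2 u ξ t * (2 - bfu u η t)
    + 2 * (2 - bfu u ξ t) * (2 - bfu u η t) * (ξ⁻¹ + η⁻¹ + 2 * u 1 t)

/-- The basic generating function `P(ξ, η) = (ξ²η²/(4(ξ − η)²))·(2μ(ξ, η) − Q(ξ, η))`. -/
noncomputable def Ppol {g : ℕ} (μ : ℕ → ℝ) (u : ℕ → (Fin g → ℝ) → ℝ) (ξ η : ℝ) :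
    (Fin g → ℝ) → ℝ :=
  fun t => ξ ^ 2 * η ^ 2 / (4 * (ξ - η) ^ 2) * (2 * muP g μ ξ η - Qpol u ξ η t)


namespace St17

variable {g : ℕ}

lemma pd_add (i : ℕ) {f h : (Fin g → ℝ) → ℝ} (hf : Differentiable ℝ f)
    (hh : Differentiable ℝ h) (t : Fin g → ℝ) :
    pd i (fun s => f s + h s) t = pd i f t + pd i h t := by
  unfold pd
  split
  · rw [fderiv_fun_add (hf t) (hh t)]; simp
  · simp

lemma pd_sub (i : ℕ) {f h : (Fin g → ℝ) → ℝ} (hf : Differentiable ℝ f)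
    (hh : Differentiable ℝ h) (t : Fin g → ℝ) :
    pd i (fun s => f s - h s) t = pd i f t - pd i h t := by
  unfold pd
  split
  · rw [fderiv_fun_sub (hf t) (hh t)]; simp
  · simp

lemma pd_const (i : ℕ) (c : ℝ) (t : Fin g → ℝ) :
    pd i (fun _ => c) t = 0 := by
  unfold pd; split <;> simp

lemma pd_const_mul (i : ℕ) (c : ℝ) {f : (Fin g → ℝ) → ℝ} (hf : Differentiable ℝ f)
    (t : Fin g → ℝ) :
    pd i (fun s => c * f s) t = c * pd i f t := by
  unfold pd
  split
  · rw [fderiv_const_mul (hf t)]; simp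
  · simp

lemma pd_mul_const (i : ℕ) (c : ℝ) {f : (Fin g → ℝ) → ℝ} (hf : Differentiable ℝ f)
    (t : Fin g → ℝ) :
    pd i (fun s => f s * c) t = pd i f t * c := by
  simp only [mul_comm _ c]; exact pd_const_mul i c hf t

lemma pd_const_sub (i : ℕ) (c : ℝ) {f : (Fin g → ℝ) → ℝ} (hf : Differentiable ℝ f)
    (t : Fin g → ℝ) :
    pd i (fun s => c - f s) t = -(pd i f t) := by
  have := pd_sub i (differentiable_const c) hf t
  rw [this, pd_const]; ring

lemma pd_mul (i : ℕ) {f h : (Fin g → ℝ) → ℝ} (hf : Differentiable ℝ f)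
    (hh : Differentiable ℝ h) (t : Fin g → ℝ) :
    pd i (fun s => f s * h s) t = pd i f t * h t + f t * pd i h t := by
  unfold pd
  split
  · rw [fderiv_fun_mul (hf t) (hh t)]; simp; ring
  · simp

lemma pd_sum (i : ℕ) {ι : Type*} (s : Finset ι) (F : ι → (Fin g → ℝ) → ℝ)
    (hF : ∀ j ∈ s, Differentiable ℝ (F j)) (t : Fin g → ℝ) :
    pd i (fun x => ∑ j ∈ s, F j x) t = ∑ j ∈ s, pd i (F j) t := by
  unfold pd
  split
  · rw [fderiv_fun_sum (fun j hj => (hF j hj) t)]; simp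
  · simp

lemma contDiff_pd {f : (Fin g → ℝ) → ℝ} (hf : ContDiff ℝ (⊤ : ℕ∞) f) (i : ℕ) :
    ContDiff ℝ (⊤ : ℕ∞) (pd i f) := by
  unfold pd
  by_cases h : 1 ≤ i ∧ i ≤ g
  · simp only [dif_pos h]
    exact (hf.fderiv_right (m := (⊤:ℕ∞)) (by norm_cast)).clm_apply contDiff_const
  · simp only [dif_neg h]
    exact contDiff_const

lemma pd_comm {f : (Fin g → ℝ) → ℝ} (hf : ContDiff ℝ (⊤ : ℕ∞) f) (i j : ℕ)
    (t : Fin g → ℝ) :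
    pd i (pd j f) t = pd j (pd i f) t := by
  have hF : Differentiable ℝ (fderiv ℝ f) :=
    (hf.fderiv_right (m := (⊤:ℕ∞)) (by norm_cast)).differentiable (by norm_cast)
  have key : ∀ v w : Fin g → ℝ,
      fderiv ℝ (fun s => fderiv ℝ f s w) t v = fderiv ℝ (fderiv ℝ f) t v w := by
    intro v w
    rw [fderiv_clm_apply (hF t) (differentiableAt_const w)]
    simp
  have symm : ∀ v w : Fin g → ℝ,
      fderiv ℝ (fderiv ℝ f) t v w = fderiv ℝ (fderiv ℝ f) t w v := by
    intro v w
    exact (hf.contDiffAt.isSymmSndFDerivAt (by rw [minSmoothness_of_isRCLikeNormedField]; exact WithTop.coe_le_coe.2 (le_top : (2 : ℕ∞) ≤ ⊤))) v w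
  by_cases hi : 1 ≤ i ∧ i ≤ g
  · by_cases hj : 1 ≤ j ∧ j ≤ g
    · have e1 : pd j f = fun s => fderiv ℝ f s
          (Pi.single (⟨j - 1, by omega⟩ : Fin g) 1) := by
        funext s; exact dif_pos hj
      have e2 : pd i f = fun s => fderiv ℝ f s
          (Pi.single (⟨i - 1, by omega⟩ : Fin g) 1) := by
        funext s; exact dif_pos hi
      rw [e1, e2]
      unfold pd
      rw [dif_pos hi, dif_pos hj, key, key, symm]
    · have e1 : pd j f = fun _ => 0 := by funext s; exact dif_neg hj
      have e2 : pd j (pd i f) t = 0 := dif_neg hj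
      rw [e1, e2, pd_const]
  · have e1 : pd i f = fun _ => 0 := by funext s; exact dif_neg hi
    have e2 : pd i (pd j f) t = 0 := dif_neg hi
    rw [e1, e2, pd_const]



lemma sumG (p : ℕ → ℝ) {ξ ζ : ℝ} (hξ : ξ ≠ 0) (hζ : ζ ≠ 0) (hne : ξ ≠ ζ) (n : ℕ) :
    ∑ k ∈ Finset.Icc 1 n, ζ ^ k * ∑ i ∈ Finset.range k, p i * ξ ^ ((i : ℤ) - k + 1)
      = ζ * ξ / (ξ - ζ) * ((∑ i ∈ Finset.range (n+1), p i * ζ ^ i)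
        - (ζ / ξ) ^ n * ∑ i ∈ Finset.range (n+1), p i * ξ ^ i) := by
  have hsub : ξ - ζ ≠ 0 := sub_ne_zero.2 hne
  induction n with
  | zero => simp
  | succ n ih =>
    rw [Finset.sum_Icc_succ_top (by omega), ih]
    have key : ∑ i ∈ Finset.range (n+1), p i * ξ ^ ((i : ℤ) - (n+1 : ℕ) + 1)
        = (∑ i ∈ Finset.range (n+1), p i * ξ ^ i) / ξ ^ n := by
      rw [Finset.sum_div]
      apply Finset.sum_congr rfl
      intro i hi
      rw [mul_div_assoc]
      congr 1
      rw [eq_div_iff (pow_ne_zero _ hξ), ← zpow_natCast ξ n, ← zpow_natCast ξ i,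
        ← zpow_add₀ hξ]
      congr 1
      push_cast
      ring
    rw [key, Finset.sum_range_succ (fun i => p i * ζ ^ i) (n+1),
      Finset.sum_range_succ (fun i => p i * ξ ^ i) (n+1)]
    have h1 : (ζ / ξ) ^ n = ζ ^ n / ξ ^ n := div_pow ζ ξ n
    have h2 : (ζ / ξ) ^ (n+1) = ζ ^ (n+1) / ξ ^ (n+1) := div_pow ζ ξ (n+1)
    rw [h1, h2]
    field_simp
    ring


section
variable {g : ℕ} (u : ℕ → (Fin g → ℝ) → ℝ)

lemma diff_u (hu : ∀ i, ContDiff ℝ (⊤ : ℕ∞) (u i)) (i : ℕ) :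
    Differentiable ℝ (u i) := (hu i).differentiable (by norm_cast)

lemma contDiff_bfu (hu : ∀ i, ContDiff ℝ (⊤ : ℕ∞) (u i)) (ξ : ℝ) :
    ContDiff ℝ (⊤ : ℕ∞) (bfu u ξ) := by
  unfold bfu; exact ContDiff.sum fun i _ => (hu i).mul contDiff_const

lemma contDiff_bfu1 (hu : ∀ i, ContDiff ℝ (⊤ : ℕ∞) (u i)) (ξ : ℝ) :
    ContDiff ℝ (⊤ : ℕ∞) (bfu1 u ξ) := by
  unfold bfu1; exact ContDiff.sum fun i _ => (contDiff_pd (hu i) 1).mul contDiff_const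

lemma contDiff_bfu2 (hu : ∀ i, ContDiff ℝ (⊤ : ℕ∞) (u i)) (ξ : ℝ) :
    ContDiff ℝ (⊤ : ℕ∞) (bfu2 u ξ) := by
  unfold bfu2; exact ContDiff.sum fun i _ => (contDiff_pd (contDiff_pd (hu i) 1) 1).mul contDiff_const

lemma pd_bfu (hu : ∀ i, ContDiff ℝ (⊤ : ℕ∞) (u i)) (k : ℕ) (ξ : ℝ) (t : Fin g → ℝ) :
    pd k (bfu u ξ) t = ∑ i ∈ Finset.Icc 1 g, pd k (u i) t * ξ ^ i := by
  unfold bfu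
  rw [pd_sum k _ _ (fun i _ => Differentiable.mul_const (diff_u u hu i) _) t]
  exact Finset.sum_congr rfl fun i _ => pd_mul_const k _ (diff_u u hu i) t

lemma pd_bfu1 (hu : ∀ i, ContDiff ℝ (⊤ : ℕ∞) (u i)) (k : ℕ) (ξ : ℝ) (t : Fin g → ℝ) :
    pd k (bfu1 u ξ) t = ∑ i ∈ Finset.Icc 1 g, pd k (pd 1 (u i)) t * ξ ^ i := by
  unfold bfu1
  rw [pd_sum k _ _ (fun i _ => Differentiable.mul_const
    ((contDiff_pd (hu i) 1).differentiable (by norm_cast)) _) t]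
  exact Finset.sum_congr rfl fun i _ => pd_mul_const k _
    ((contDiff_pd (hu i) 1).differentiable (by norm_cast)) t

lemma pd_bfu2 (hu : ∀ i, ContDiff ℝ (⊤ : ℕ∞) (u i)) (k : ℕ) (ξ : ℝ) (t : Fin g → ℝ) :
    pd k (bfu2 u ξ) t = ∑ i ∈ Finset.Icc 1 g, pd k (pd 1 (pd 1 (u i))) t * ξ ^ i := by
  unfold bfu2
  rw [pd_sum k _ _ (fun i _ => Differentiable.mul_const
    ((contDiff_pd (contDiff_pd (hu i) 1) 1).differentiable (by norm_cast)) _) t]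
  exact Finset.sum_congr rfl fun i _ => pd_mul_const k _
    ((contDiff_pd (contDiff_pd (hu i) 1) 1).differentiable (by norm_cast)) t

lemma pd_one_bfu (hu : ∀ i, ContDiff ℝ (⊤ : ℕ∞) (u i)) (ξ : ℝ) :
    pd 1 (bfu u ξ) = bfu1 u ξ := by
  funext t; rw [pd_bfu u hu 1 ξ t]; rfl

lemma pd_one_bfu1 (hu : ∀ i, ContDiff ℝ (⊤ : ℕ∞) (u i)) (ξ : ℝ) :
    pd 1 (bfu1 u ξ) = bfu2 u ξ := by
  funext t; rw [pd_bfu1 u hu 1 ξ t]; rfl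

lemma pd_one_bfu2 (hu : ∀ i, ContDiff ℝ (⊤ : ℕ∞) (u i)) (ξ : ℝ) :
    pd 1 (bfu2 u ξ) = bfu3 u ξ := by
  funext t; rw [pd_bfu2 u hu 1 ξ t]; rfl

lemma sumDkA (t : Fin g → ℝ) {ξ ζ : ℝ} (hξ : ξ ≠ 0) (hζ : ζ ≠ 0) (hne : ξ ≠ ζ) :
    ∑ k ∈ Finset.Icc 1 g, ζ ^ k * DkA u k ξ t
      = ζ * ξ / (2 * (ξ - ζ)) * ((2 - bfu u ζ t) - (ζ/ξ)^g * (2 - bfu u ξ t)) := by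
  set p : ℕ → ℝ := fun i => if i = 0 then 2 else -(u i t) with hp
  have hDk : ∀ k ∈ Finset.Icc 1 g, ζ ^ k * DkA u k ξ t
      = (1/2 : ℝ) * (ζ ^ k * ∑ i ∈ Finset.range k, p i * ξ ^ ((i:ℤ) - k + 1)) := by
    intro k hk
    have hk1 : 1 ≤ k := (Finset.mem_Icc.1 hk).1
    have hIco : Finset.Ico 1 k = Finset.Icc 1 (k-1) := by
      rw [← Finset.Ico_add_one_right_eq_Icc]; congr 1; omega
    have split : ∑ i ∈ Finset.range k, p i * ξ ^ ((i:ℤ) - k + 1)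
        = 2 * ξ ^ (1 - (k:ℤ))
          + ∑ i ∈ Finset.Icc 1 (k-1), (-(u i t)) * ξ ^ ((i:ℤ) - (k:ℤ) + 1) := by
      rw [Finset.range_eq_Ico, Finset.sum_eq_sum_Ico_succ_bot hk1]
      congr 1
      · have he : ((0:ℕ):ℤ) - (k:ℤ) + 1 = 1 - (k:ℤ) := by push_cast; ring
        rw [he]; simp [p]
      · rw [hIco]
        exact Finset.sum_congr rfl fun i hi => by
          have : i ≠ 0 := by
            have := (Finset.mem_Icc.1 hi).1; omega
          simp [p, this]
    unfold DkA
    rw [split]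
    ring
  rw [Finset.sum_congr rfl hDk, ← Finset.mul_sum, sumG p hξ hζ hne g]
  have hP : ∀ x : ℝ, ∑ i ∈ Finset.range (g+1), p i * x ^ i = 2 - bfu u x t := by
    intro x
    rw [Finset.range_eq_Ico, Finset.sum_eq_sum_Ico_succ_bot (by omega), Finset.Ico_add_one_right_eq_Icc]
    have h0 : p 0 * x ^ 0 = 2 := by simp [p]
    have hrest : ∑ i ∈ Finset.Icc 1 g, p i * x ^ i
        = -∑ i ∈ Finset.Icc 1 g, u i t * x ^ i := by
      rw [← Finset.sum_neg_distrib]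
      exact Finset.sum_congr rfl fun i hi => by
        have : i ≠ 0 := by have := (Finset.mem_Icc.1 hi).1; omega
        simp [p, this]
    rw [h0, hrest]
    unfold bfu
    ring
  rw [hP, hP]
  have hsub : ξ - ζ ≠ 0 := sub_ne_zero.2 hne
  rw [div_pow]
  field_simp

lemma sumDkB (t : Fin g → ℝ) {ξ ζ : ℝ} (hξ : ξ ≠ 0) (hζ : ζ ≠ 0) (hne : ξ ≠ ζ) :
    ∑ k ∈ Finset.Icc 1 g, ζ ^ k * DkB u k ξ t
      = ζ * ξ / (2 * (ξ - ζ)) * (bfu1 u ζ t - (ζ/ξ)^g * bfu1 u ξ t) := by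
  set p : ℕ → ℝ := fun i => if i = 0 then 0 else pd 1 (u i) t with hp
  have hDk : ∀ k ∈ Finset.Icc 1 g, ζ ^ k * DkB u k ξ t
      = (1/2 : ℝ) * (ζ ^ k * ∑ i ∈ Finset.range k, p i * ξ ^ ((i:ℤ) - k + 1)) := by
    intro k hk
    have hk1 : 1 ≤ k := (Finset.mem_Icc.1 hk).1
    have hIco : Finset.Ico 1 k = Finset.Icc 1 (k-1) := by
      rw [← Finset.Ico_add_one_right_eq_Icc]; congr 1; omega
    have split : ∑ i ∈ Finset.range k, p i * ξ ^ ((i:ℤ) - k + 1)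
        = ∑ i ∈ Finset.Icc 1 (k-1), pd 1 (u i) t * ξ ^ ((i:ℤ) - (k:ℤ) + 1) := by
      rw [Finset.range_eq_Ico, Finset.sum_eq_sum_Ico_succ_bot hk1]
      have h0 : p 0 * ξ ^ ((0:ℤ) - (k:ℤ) + 1) = 0 := by simp [p]
      rw [show ((0:ℕ):ℤ) - (k:ℤ) + 1 = (0:ℤ) - (k:ℤ) + 1 by push_cast; ring, h0, hIco]
      rw [zero_add]
      exact Finset.sum_congr rfl fun i hi => by
        have : i ≠ 0 := by have := (Finset.mem_Icc.1 hi).1; omega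
        simp [p, this]
    unfold DkB
    rw [split]
    ring
  rw [Finset.sum_congr rfl hDk, ← Finset.mul_sum, sumG p hξ hζ hne g]
  have hP : ∀ x : ℝ, ∑ i ∈ Finset.range (g+1), p i * x ^ i = bfu1 u x t := by
    intro x
    rw [Finset.range_eq_Ico, Finset.sum_eq_sum_Ico_succ_bot (by omega), Finset.Ico_add_one_right_eq_Icc]
    have h0 : p 0 * x ^ 0 = 0 := by simp [p]
    have hrest : ∑ i ∈ Finset.Icc 1 g, p i * x ^ i
        = ∑ i ∈ Finset.Icc 1 g, pd 1 (u i) t * x ^ i :=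
      Finset.sum_congr rfl fun i hi => by
        have : i ≠ 0 := by have := (Finset.mem_Icc.1 hi).1; omega
        simp [p, this]
    rw [h0, hrest, zero_add]
    rfl
  rw [hP, hP]
  have hsub : ξ - ζ ≠ 0 := sub_ne_zero.2 hne
  rw [div_pow]
  field_simp

end

section
variable {g : ℕ} (u : ℕ → (Fin g → ℝ) → ℝ)

lemma key1 (hu : ∀ i, ContDiff ℝ (⊤ : ℕ∞) (u i))
    (hdkq : ∀ k, 1 ≤ k → k ≤ g → ∀ t, ∀ ξ : ℝ, ξ ≠ 0 →
      pd k (bfu u ξ) t = DkA u k ξ t * bfu1 u ξ t - DkB u k ξ t * (2 - bfu u ξ t))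
    (t : Fin g → ℝ) {ξ ζ : ℝ} (hξ : ξ ≠ 0) (hζ : ζ ≠ 0) (hne : ξ ≠ ζ) :
    ∑ k ∈ Finset.Icc 1 g, ζ ^ k * pd k (bfu u ξ) t
      = ζ * ξ / (2 * (ξ - ζ)) *
        ((2 - bfu u ζ t) * bfu1 u ξ t - (2 - bfu u ξ t) * bfu1 u ζ t) := by
  have h : ∀ k ∈ Finset.Icc 1 g, ζ ^ k * pd k (bfu u ξ) t
      = (ζ ^ k * DkA u k ξ t) * bfu1 u ξ t - (ζ ^ k * DkB u k ξ t) * (2 - bfu u ξ t) := by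
    intro k hk
    obtain ⟨h1, h2⟩ := Finset.mem_Icc.1 hk
    rw [hdkq k h1 h2 t ξ hξ]; ring
  rw [Finset.sum_congr rfl h, Finset.sum_sub_distrib, ← Finset.sum_mul, ← Finset.sum_mul,
    sumDkA u t hξ hζ hne, sumDkB u t hξ hζ hne]
  ring

lemma key2 (hu : ∀ i, ContDiff ℝ (⊤ : ℕ∞) (u i))
    (hdkq : ∀ k, 1 ≤ k → k ≤ g → ∀ t, ∀ ξ : ℝ, ξ ≠ 0 →
      pd k (bfu u ξ) t = DkA u k ξ t * bfu1 u ξ t - DkB u k ξ t * (2 - bfu u ξ t))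
    (t : Fin g → ℝ) {ξ ζ : ℝ} (hξ : ξ ≠ 0) (hζ : ζ ≠ 0) (hne : ξ ≠ ζ) :
    ∑ k ∈ Finset.Icc 1 g, ζ ^ k * pd k (bfu1 u ξ) t
      = ζ * ξ / (2 * (ξ - ζ)) *
        ((2 - bfu u ζ t) * bfu2 u ξ t - (2 - bfu u ξ t) * bfu2 u ζ t) := by
  have dbfu : ∀ x : ℝ, Differentiable ℝ (bfu u x) :=
    fun x => (contDiff_bfu u hu x).differentiable (by norm_cast)
  have dbfu1 : ∀ x : ℝ, Differentiable ℝ (bfu1 u x) :=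
    fun x => (contDiff_bfu1 u hu x).differentiable (by norm_cast)
  have dA : ∀ x : ℝ, Differentiable ℝ (fun s => 2 - bfu u x s) :=
    fun x => (differentiable_const 2).sub (dbfu x)
  have hsm : ∀ k, ContDiff ℝ (⊤ : ℕ∞) (pd k (bfu u ξ)) :=
    fun k => contDiff_pd (contDiff_bfu u hu ξ) k
  have e1 : ∀ k, pd k (bfu1 u ξ) t = pd 1 (pd k (bfu u ξ)) t := by
    intro k
    rw [← pd_one_bfu u hu ξ, pd_comm (contDiff_bfu u hu ξ)]
  have e2 : pd 1 (fun s => ∑ k ∈ Finset.Icc 1 g, ζ ^ k * pd k (bfu u ξ) s) t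
      = ∑ k ∈ Finset.Icc 1 g, ζ ^ k * pd 1 (pd k (bfu u ξ)) t := by
    rw [pd_sum 1 _ _
      (fun k _ => ((hsm k).differentiable (by norm_cast)).const_mul _) t]
    exact Finset.sum_congr rfl fun k _ =>
      pd_const_mul 1 _ ((hsm k).differentiable (by norm_cast)) t
  have efun : (fun s => ∑ k ∈ Finset.Icc 1 g, ζ ^ k * pd k (bfu u ξ) s)
      = (fun s => ζ * ξ / (2 * (ξ - ζ)) *
          ((2 - bfu u ζ s) * bfu1 u ξ s - (2 - bfu u ξ s) * bfu1 u ζ s)) :=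
    funext fun s => key1 u hu hdkq s hξ hζ hne
  have lhs_eq : ∑ k ∈ Finset.Icc 1 g, ζ ^ k * pd k (bfu1 u ξ) t
      = pd 1 (fun s => ∑ k ∈ Finset.Icc 1 g, ζ ^ k * pd k (bfu u ξ) s) t := by
    rw [e2]
    exact Finset.sum_congr rfl fun k _ => by rw [e1]
  rw [lhs_eq, efun]
  rw [pd_const_mul 1 _ (f := fun s => (2 - bfu u ζ s) * bfu1 u ξ s - (2 - bfu u ξ s) * bfu1 u ζ s)
      (((dA ζ).mul (dbfu1 ξ)).sub ((dA ξ).mul (dbfu1 ζ))) t,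
    pd_sub 1 (f := fun s => (2 - bfu u ζ s) * bfu1 u ξ s) (h := fun s => (2 - bfu u ξ s) * bfu1 u ζ s)
      ((dA ζ).mul (dbfu1 ξ)) ((dA ξ).mul (dbfu1 ζ)) t,
    pd_mul 1 (dA ζ) (dbfu1 ξ) t, pd_mul 1 (dA ξ) (dbfu1 ζ) t,
    pd_const_sub 1 2 (dbfu ζ) t, pd_const_sub 1 2 (dbfu ξ) t]
  have b1 : ∀ x : ℝ, pd 1 (bfu u x) t = bfu1 u x t :=
    fun x => congrFun (pd_one_bfu u hu x) t
  have b2 : ∀ x : ℝ, pd 1 (bfu1 u x) t = bfu2 u x t :=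
    fun x => congrFun (pd_one_bfu1 u hu x) t
  rw [b1, b1, b2, b2]
  ring

lemma key3 (hu : ∀ i, ContDiff ℝ (⊤ : ℕ∞) (u i))
    (hdkq : ∀ k, 1 ≤ k → k ≤ g → ∀ t, ∀ ξ : ℝ, ξ ≠ 0 →
      pd k (bfu u ξ) t = DkA u k ξ t * bfu1 u ξ t - DkB u k ξ t * (2 - bfu u ξ t))
    (t : Fin g → ℝ) {ξ ζ : ℝ} (hξ : ξ ≠ 0) (hζ : ζ ≠ 0) (hne : ξ ≠ ζ) :
    ∑ k ∈ Finset.Icc 1 g, ζ ^ k * pd k (bfu2 u ξ) t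
      = ζ * ξ / (2 * (ξ - ζ)) *
        ((2 - bfu u ζ t) * bfu3 u ξ t - (2 - bfu u ξ t) * bfu3 u ζ t
          - bfu1 u ζ t * bfu2 u ξ t + bfu1 u ξ t * bfu2 u ζ t) := by
  have dbfu : ∀ x : ℝ, Differentiable ℝ (bfu u x) :=
    fun x => (contDiff_bfu u hu x).differentiable (by norm_cast)
  have dbfu2 : ∀ x : ℝ, Differentiable ℝ (bfu2 u x) :=
    fun x => (contDiff_bfu2 u hu x).differentiable (by norm_cast)
  have dA : ∀ x : ℝ, Differentiable ℝ (fun s => 2 - bfu u x s) :=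
    fun x => (differentiable_const 2).sub (dbfu x)
  have hsm : ∀ k, ContDiff ℝ (⊤ : ℕ∞) (pd k (bfu1 u ξ)) :=
    fun k => contDiff_pd (contDiff_bfu1 u hu ξ) k
  have e1 : ∀ k, pd k (bfu2 u ξ) t = pd 1 (pd k (bfu1 u ξ)) t := by
    intro k
    rw [← pd_one_bfu1 u hu ξ, pd_comm (contDiff_bfu1 u hu ξ)]
  have e2 : pd 1 (fun s => ∑ k ∈ Finset.Icc 1 g, ζ ^ k * pd k (bfu1 u ξ) s) t
      = ∑ k ∈ Finset.Icc 1 g, ζ ^ k * pd 1 (pd k (bfu1 u ξ)) t := by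
    rw [pd_sum 1 _ _
      (fun k _ => ((hsm k).differentiable (by norm_cast)).const_mul _) t]
    exact Finset.sum_congr rfl fun k _ =>
      pd_const_mul 1 _ ((hsm k).differentiable (by norm_cast)) t
  have efun : (fun s => ∑ k ∈ Finset.Icc 1 g, ζ ^ k * pd k (bfu1 u ξ) s)
      = (fun s => ζ * ξ / (2 * (ξ - ζ)) *
          ((2 - bfu u ζ s) * bfu2 u ξ s - (2 - bfu u ξ s) * bfu2 u ζ s)) :=
    funext fun s => key2 u hu hdkq s hξ hζ hne
  have lhs_eq : ∑ k ∈ Finset.Icc 1 g, ζ ^ k * pd k (bfu2 u ξ) t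
      = pd 1 (fun s => ∑ k ∈ Finset.Icc 1 g, ζ ^ k * pd k (bfu1 u ξ) s) t := by
    rw [e2]
    exact Finset.sum_congr rfl fun k _ => by rw [e1]
  rw [lhs_eq, efun]
  rw [pd_const_mul 1 _ (f := fun s => (2 - bfu u ζ s) * bfu2 u ξ s - (2 - bfu u ξ s) * bfu2 u ζ s)
      (((dA ζ).mul (dbfu2 ξ)).sub ((dA ξ).mul (dbfu2 ζ))) t,
    pd_sub 1 (f := fun s => (2 - bfu u ζ s) * bfu2 u ξ s) (h := fun s => (2 - bfu u ξ s) * bfu2 u ζ s)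
      ((dA ζ).mul (dbfu2 ξ)) ((dA ξ).mul (dbfu2 ζ)) t,
    pd_mul 1 (dA ζ) (dbfu2 ξ) t, pd_mul 1 (dA ξ) (dbfu2 ζ) t,
    pd_const_sub 1 2 (dbfu ζ) t, pd_const_sub 1 2 (dbfu ξ) t]
  have b1 : ∀ x : ℝ, pd 1 (bfu u x) t = bfu1 u x t :=
    fun x => congrFun (pd_one_bfu u hu x) t
  have b3 : ∀ x : ℝ, pd 1 (bfu2 u x) t = bfu3 u x t :=
    fun x => congrFun (pd_one_bfu2 u hu x) t
  rw [b1, b1, b3, b3]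
  ring

end

section
variable {g : ℕ} (u : ℕ → (Fin g → ℝ) → ℝ)

open Polynomial in
lemma key4 (hg : 1 ≤ g) (hu : ∀ i, ContDiff ℝ (⊤ : ℕ∞) (u i))
    (hdkq : ∀ k, 1 ≤ k → k ≤ g → ∀ t, ∀ ξ : ℝ, ξ ≠ 0 →
      pd k (bfu u ξ) t = DkA u k ξ t * bfu1 u ξ t - DkB u k ξ t * (2 - bfu u ξ t))
    (t : Fin g → ℝ) {ζ : ℝ} (hζ : ζ ≠ 0) :
    ∑ k ∈ Finset.Icc 1 g, ζ ^ k * pd k (u 1) t = bfu1 u ζ t := by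
  classical
  set c : ℕ → ℝ := fun i => ∑ k ∈ Finset.Icc 1 g, ζ ^ k * pd k (u i) t with hc
  set a : ℕ → ℝ := fun i => u i t with ha
  set b : ℕ → ℝ := fun i => pd 1 (u i) t with hb
  have hswap : ∀ x : ℝ, ∑ k ∈ Finset.Icc 1 g, ζ ^ k * pd k (bfu u x) t
      = ∑ i ∈ Finset.Icc 1 g, c i * x ^ i := by
    intro x
    rw [Finset.sum_congr rfl (fun k (_ : k ∈ Finset.Icc 1 g) => by
      rw [pd_bfu u hu k x t, Finset.mul_sum])]
    rw [Finset.sum_comm]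
    refine Finset.sum_congr rfl fun i _ => ?_
    rw [hc, Finset.sum_mul]
    exact Finset.sum_congr rfl fun k _ => (mul_assoc _ _ _).symm
  have main : ∀ x : ℝ, x ≠ 0 → x ≠ ζ →
      (2 * x - 2 * ζ) * ∑ i ∈ Finset.Icc 1 g, c i * x ^ i
        = ζ * (2 - bfu u ζ t) * x * (∑ i ∈ Finset.Icc 1 g, b i * x ^ i)
          - 2 * ζ * bfu1 u ζ t * x
          + ζ * bfu1 u ζ t * x * (∑ i ∈ Finset.Icc 1 g, a i * x ^ i) := by
    intro x hx hxζ
    have h1 := key1 u hu hdkq t hx hζ hxζ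
    rw [hswap x] at h1
    have hbfu : bfu u x t = ∑ i ∈ Finset.Icc 1 g, a i * x ^ i := rfl
    have hbfu1 : bfu1 u x t = ∑ i ∈ Finset.Icc 1 g, b i * x ^ i := rfl
    rw [h1, ← hbfu, ← hbfu1]
    have hsub : x - ζ ≠ 0 := sub_ne_zero.2 hxζ
    field_simp
    ring
  set S : (ℕ → ℝ) → ℝ[X] := fun d => ∑ i ∈ Finset.Icc 1 g, C (d i) * X ^ i with hS
  have evS : ∀ (d : ℕ → ℝ) (x : ℝ), eval x (S d) = ∑ i ∈ Finset.Icc 1 g, d i * x ^ i := by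
    intro d x
    rw [hS]
    simp [eval_finset_sum]
  set PL : ℝ[X] := (C 2 * X - C (2 * ζ)) * S c with hPL
  set PR : ℝ[X] := C (ζ * (2 - bfu u ζ t)) * X * S b - C (2 * ζ * bfu1 u ζ t) * X
      + C (ζ * bfu1 u ζ t) * X * S a with hPR
  have heq : PL = PR := by
    apply Polynomial.eq_of_infinite_eval_eq
    have hinf : ({0, ζ} : Set ℝ)ᶜ.Infinite := (Set.toFinite _).infinite_compl
    apply hinf.mono
    intro x hx
    simp only [Set.mem_compl_iff, Set.mem_insert_iff, Set.mem_singleton_iff, not_or] at hx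
    obtain ⟨hx0, hxζ⟩ := hx
    simp only [Set.mem_setOf_eq, hPL, hPR, eval_mul, eval_sub, eval_add, eval_C, eval_X, evS]
    linear_combination main x hx0 hxζ
  have hco0 : ∀ d : ℕ → ℝ, (S d).coeff 0 = 0 := by
    intro d
    rw [hS, Polynomial.finset_sum_coeff]
    apply Finset.sum_eq_zero
    intro i hi
    rw [Polynomial.coeff_C_mul, Polynomial.coeff_X_pow]
    have hne : i ≠ 0 := by have := (Finset.mem_Icc.1 hi).1; omega
    simp [Ne.symm hne]
  have hco1 : ∀ d : ℕ → ℝ, (S d).coeff 1 = d 1 := by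
    intro d
    rw [hS, Polynomial.finset_sum_coeff]
    rw [Finset.sum_eq_single 1]
    · simp
    · intro i _ hne
      rw [Polynomial.coeff_C_mul, Polynomial.coeff_X_pow]
      simp [Ne.symm hne]
    · intro h
      exact absurd (Finset.mem_Icc.2 ⟨le_refl 1, hg⟩) h
  have cPL : PL.coeff 1 = -(2 * ζ) * c 1 := by
    rw [hPL, sub_mul, Polynomial.coeff_sub, mul_assoc, Polynomial.coeff_C_mul,
      Polynomial.coeff_X_mul, Polynomial.coeff_C_mul, hco0, hco1]
    ring
  have cPR : PR.coeff 1 = -(2 * ζ * bfu1 u ζ t) := by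
    rw [hPR]
    simp only [Polynomial.coeff_add, Polynomial.coeff_sub, mul_assoc,
      Polynomial.coeff_C_mul, Polynomial.coeff_X_mul, hco0, Polynomial.coeff_X_one]
    ring
  have : -(2 * ζ) * c 1 = -(2 * ζ * bfu1 u ζ t) := by rw [← cPL, ← cPR, heq]
  have hne2 : (-(2 * ζ) : ℝ) ≠ 0 := by
    simp [hζ]
  have := mul_left_cancel₀ hne2 (by linarith [this] : -(2 * ζ) * c 1 = -(2 * ζ) * bfu1 u ζ t)
  exact this

end

section
variable {g : ℕ} (u : ℕ → (Fin g → ℝ) → ℝ)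

lemma pd_shift (i : ℕ) (c d : ℝ) {f : (Fin g → ℝ) → ℝ} (hf : Differentiable ℝ f)
    (t : Fin g → ℝ) :
    pd i (fun s => c + d * f s) t = d * pd i f t := by
  unfold pd
  split
  · rw [fderiv_fun_add (differentiableAt_const c) ((hf t).const_mul d),
      fderiv_const_mul (hf t)]
    simp
  · simp

lemma pd_Qpol (hu : ∀ i, ContDiff ℝ (⊤ : ℕ∞) (u i)) (k : ℕ) (x y : ℝ) (t : Fin g → ℝ) :
    pd k (Qpol u x y) t =
      pd k (bfu1 u x) t * bfu1 u y t + bfu1 u x t * pd k (bfu1 u y) t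
      + (-(pd k (bfu u x) t)) * bfu2 u y t + (2 - bfu u x t) * pd k (bfu2 u y) t
      + pd k (bfu2 u x) t * (2 - bfu u y t) + bfu2 u x t * (-(pd k (bfu u y) t))
      + (2 * ((-(pd k (bfu u x) t)) * (2 - bfu u y t)
          + (2 - bfu u x t) * (-(pd k (bfu u y) t)))) * (x⁻¹ + y⁻¹ + 2 * u 1 t)
      + 2 * (2 - bfu u x t) * (2 - bfu u y t) * (2 * pd k (u 1) t) := by
  have dbfu : ∀ z : ℝ, Differentiable ℝ (bfu u z) :=
    fun z => (contDiff_bfu u hu z).differentiable (by norm_cast)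
  have dbfu1 : ∀ z : ℝ, Differentiable ℝ (bfu1 u z) :=
    fun z => (contDiff_bfu1 u hu z).differentiable (by norm_cast)
  have dbfu2 : ∀ z : ℝ, Differentiable ℝ (bfu2 u z) :=
    fun z => (contDiff_bfu2 u hu z).differentiable (by norm_cast)
  have du1 : Differentiable ℝ (u 1) := diff_u u hu 1
  have dA : ∀ z : ℝ, Differentiable ℝ (fun s => 2 - bfu u z s) :=
    fun z => (differentiable_const 2).sub (dbfu z)
  have d1 : Differentiable ℝ (fun s => bfu1 u x s * bfu1 u y s) :=
    (dbfu1 x).mul (dbfu1 y)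
  have d2 : Differentiable ℝ (fun s => (2 - bfu u x s) * bfu2 u y s) :=
    (dA x).mul (dbfu2 y)
  have d3 : Differentiable ℝ (fun s => bfu2 u x s * (2 - bfu u y s)) :=
    (dbfu2 x).mul (dA y)
  have d4aa : Differentiable ℝ (fun s => 2 * (2 - bfu u x s)) :=
    (dA x).const_mul 2
  have d4a : Differentiable ℝ (fun s => 2 * (2 - bfu u x s) * (2 - bfu u y s)) :=
    d4aa.mul (dA y)
  have d4b : Differentiable ℝ (fun s => x⁻¹ + y⁻¹ + 2 * u 1 s) :=
    (differentiable_const (x⁻¹ + y⁻¹)).add (du1.const_mul 2)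
  have d12 : Differentiable ℝ
      (fun s => bfu1 u x s * bfu1 u y s + (2 - bfu u x s) * bfu2 u y s) := d1.add d2
  have d123 : Differentiable ℝ
      (fun s => bfu1 u x s * bfu1 u y s + (2 - bfu u x s) * bfu2 u y s
        + bfu2 u x s * (2 - bfu u y s)) := d12.add d3
  have d4 : Differentiable ℝ
      (fun s => 2 * (2 - bfu u x s) * (2 - bfu u y s) * (x⁻¹ + y⁻¹ + 2 * u 1 s)) :=
    d4a.mul d4b
  unfold Qpol
  rw [pd_add k d123 d4 t, pd_add k d12 d3 t, pd_add k d1 d2 t,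
    pd_mul k (dbfu1 x) (dbfu1 y) t, pd_mul k (dA x) (dbfu2 y) t,
    pd_mul k (dbfu2 x) (dA y) t,
    pd_mul k d4a d4b t, pd_mul k d4aa (dA y) t,
    pd_const_mul k 2 (dA x) t,
    pd_shift k (x⁻¹ + y⁻¹) 2 du1 t,
    pd_const_sub k 2 (dbfu x) t, pd_const_sub k 2 (dbfu y) t]
  ring

end

set_option maxHeartbeats 4000000 in
lemma final_alg (ξ η ζ Aξ Aη Aζ Bξ Bη Bζ Cξ Cη Cζ U V : ℝ)
    (hξ : ξ ≠ 0) (hη : η ≠ 0) (hζ : ζ ≠ 0)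
    (hξη : ξ ≠ η) (hξζ : ξ ≠ ζ) (hηζ : η ≠ ζ) :
    -(ξ ^ 2 * η ^ 2 / (4 * (ξ - η) ^ 2)) * (Bη * (ζ * ξ / (2 * (ξ - ζ)) * (Aζ * Cξ - Aξ * Cζ)) + Bξ * (ζ * η / (2 * (η - ζ)) * (Aζ * Cη - Aη * Cζ)) + (-Cη - 2 * Aη * (ξ⁻¹ + η⁻¹ + 2 * U)) * (ζ * ξ / (2 * (ξ - ζ)) * (Aζ * Bξ - Aξ * Bζ)) + (-Cξ - 2 * Aξ * (ξ⁻¹ + η⁻¹ + 2 * U)) * (ζ * η / (2 * (η - ζ)) * (Aζ * Bη - Aη * Bζ)) + Aξ * (ζ * η / (2 * (η - ζ)) * (Aζ * (4 * (η⁻¹ + U) * Bη - 2 * V * Aη) - Aη * (4 * (ζ⁻¹ + U) * Bζ - 2 * V * Aζ) - Bζ * Cη + Bη * Cζ)) + Aη * (ζ * ξ / (2 * (ξ - ζ)) * (Aζ * (4 * (ξ⁻¹ + U) * Bξ - 2 * V * Aξ) - Aξ * (4 * (ζ⁻¹ + U) * Bζ - 2 * V * Aζ) - Bζ * Cξ +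 Bξ * Cζ)) + 4 * Aξ * Aη * Bζ)
      = -(ζ ^ 2 * η ^ 2 / (4 * (ζ - η) ^ 2)) * (Bη * (ξ * ζ / (2 * (ζ - ξ)) * (Aξ * Cζ - Aζ * Cξ)) + Bζ * (ξ * η / (2 * (η - ξ)) * (Aξ * Cη - Aη * Cξ)) + (-Cη - 2 * Aη * (ζ⁻¹ + η⁻¹ + 2 * U)) * (ξ * ζ / (2 * (ζ - ξ)) * (Aξ * Bζ - Aζ * Bξ)) + (-Cζ - 2 * Aζ * (ζ⁻¹ + η⁻¹ + 2 * U)) * (ξ * η / (2 * (η - ξ)) * (Aξ * Bη - Aη * Bξ)) + Aζ * (ξ * η / (2 * (η - ξ)) * (Aξ * (4 * (η⁻¹ + U) * Bη - 2 * V * Aη) - Aη * (4 * (ξ⁻¹ + U) * Bξ - 2 * V * Aξ) - Bξ * Cη + Bη * Cξ)) + Aη * (ξ * ζ / (2 * (ζ - ξ)) * (Aξ * (4 * (ζ⁻¹ + U) * Bζ - 2 * V * Aζ) - Aζ * (4 * (ξ⁻¹ + U) * Bξ - 2 * V * Aξ) - Bξ * Cζ + Bζ * Cξ)) + 4 * Aζ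 * Aη * Bξ) := by
  have h1 : ξ - η ≠ 0 := sub_ne_zero.2 hξη
  have h2 : ζ - η ≠ 0 := sub_ne_zero.2 (Ne.symm hηζ)
  have h3 : ξ - ζ ≠ 0 := sub_ne_zero.2 hξζ
  have h4 : ζ - ξ ≠ 0 := sub_ne_zero.2 (Ne.symm hξζ)
  have h5 : η - ζ ≠ 0 := sub_ne_zero.2 hηζ
  have h6 : η - ξ ≠ 0 := sub_ne_zero.2 (Ne.symm hξη)
  field_simp
  ring

end St17

set_option maxHeartbeats 1000000 in
/-- Assume equations (4mu′) and (dkq), and let `μ_1, …, μ_{2g}` be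
arbitrary real constants. Then for all pairwise distinct nonzero real `ξ, η, ζ` and
all `t`: `∂(ζ)P(ξ, η) = ∂(ξ)P(ζ, η)`, where `∂(ζ) = ∑_{i=1}^g ζ^i ∂_i`. -/
theorem statement17 (g : ℕ) (hg : 1 ≤ g) (u : ℕ → (Fin g → ℝ) → ℝ)
    (hu : ∀ i, ContDiff ℝ (⊤ : ℕ∞) (u i))
    (h4mu' : ∀ t, ∀ ξ : ℝ, ξ ≠ 0 →
      bfu3 u ξ t + 2 * pd 1 (u 1) t * (2 - bfu u ξ t)
        - 4 * (ξ⁻¹ + u 1 t) * bfu1 u ξ t = 0)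
    (hdkq : ∀ k, 1 ≤ k → k ≤ g → ∀ t, ∀ ξ : ℝ, ξ ≠ 0 →
      pd k (bfu u ξ) t = DkA u k ξ t * bfu1 u ξ t - DkB u k ξ t * (2 - bfu u ξ t))
    (μ : ℕ → ℝ) :
    ∀ ξ η ζ : ℝ, ξ ≠ 0 → η ≠ 0 → ζ ≠ 0 → ξ ≠ η → ξ ≠ ζ → η ≠ ζ → ∀ t,
      ∑ i ∈ Finset.Icc 1 g, ζ ^ i * pd i (Ppol μ u ξ η) t
        = ∑ i ∈ Finset.Icc 1 g, ξ ^ i * pd i (Ppol μ u ζ η) t := by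
  intro ξ η ζ hξ hη hζ hξη hξζ hηζ t
  have dbfu : ∀ z : ℝ, Differentiable ℝ (bfu u z) :=
    fun z => (St17.contDiff_bfu u hu z).differentiable (by norm_cast)
  have dbfu1 : ∀ z : ℝ, Differentiable ℝ (bfu1 u z) :=
    fun z => (St17.contDiff_bfu1 u hu z).differentiable (by norm_cast)
  have dbfu2 : ∀ z : ℝ, Differentiable ℝ (bfu2 u z) :=
    fun z => (St17.contDiff_bfu2 u hu z).differentiable (by norm_cast)
  have du1 : Differentiable ℝ (u 1) := St17.diff_u u hu 1
  have dA : ∀ z : ℝ, Differentiable ℝ (fun s => 2 - bfu u z s) :=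
    fun z => (differentiable_const 2).sub (dbfu z)
  have dQ : ∀ x y : ℝ, Differentiable ℝ (Qpol u x y) := by
    intro x y
    have hq : Qpol u x y = fun s =>
        bfu1 u x s * bfu1 u y s + (2 - bfu u x s) * bfu2 u y s
        + bfu2 u x s * (2 - bfu u y s)
        + 2 * (2 - bfu u x s) * (2 - bfu u y s) * (x⁻¹ + y⁻¹ + 2 * u 1 s) := rfl
    rw [hq]
    exact ((((dbfu1 x).mul (dbfu1 y)).add ((dA x).mul (dbfu2 y))).add
      ((dbfu2 x).mul (dA y))).add
      ((((dA x).const_mul 2).mul (dA y)).mul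
        ((differentiable_const (x⁻¹ + y⁻¹)).add (du1.const_mul 2)))
  have hPp : ∀ (x y : ℝ) (k : ℕ), pd k (Ppol μ u x y) t
      = x ^ 2 * y ^ 2 / (4 * (x - y) ^ 2) * (-(pd k (Qpol u x y) t)) := by
    intro x y k
    unfold Ppol
    rw [St17.pd_const_mul k _ (f := fun s => 2 * muP g μ x y - Qpol u x y s) ((differentiable_const (2 * muP g μ x y)).sub (dQ x y)) t,
      St17.pd_const_sub k _ (dQ x y) t]
  have hSQ : ∀ (w x y : ℝ), w ≠ 0 → x ≠ 0 → y ≠ 0 → x ≠ w → y ≠ w →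
      ∑ k ∈ Finset.Icc 1 g, w ^ k * pd k (Qpol u x y) t
        = bfu1 u y t * (w * x / (2 * (x - w)) *
            ((2 - bfu u w t) * bfu2 u x t - (2 - bfu u x t) * bfu2 u w t))
          + bfu1 u x t * (w * y / (2 * (y - w)) *
            ((2 - bfu u w t) * bfu2 u y t - (2 - bfu u y t) * bfu2 u w t))
          + (-(bfu2 u y t) - 2 * (2 - bfu u y t) * (x⁻¹ + y⁻¹ + 2 * u 1 t)) *
            (w * x / (2 * (x - w)) *
              ((2 - bfu u w t) * bfu1 u x t - (2 - bfu u x t) * bfu1 u w t))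
          + (-(bfu2 u x t) - 2 * (2 - bfu u x t) * (x⁻¹ + y⁻¹ + 2 * u 1 t)) *
            (w * y / (2 * (y - w)) *
              ((2 - bfu u w t) * bfu1 u y t - (2 - bfu u y t) * bfu1 u w t))
          + (2 - bfu u x t) * (w * y / (2 * (y - w)) *
              ((2 - bfu u w t) * bfu3 u y t - (2 - bfu u y t) * bfu3 u w t
                - bfu1 u w t * bfu2 u y t + bfu1 u y t * bfu2 u w t))
          + (2 - bfu u y t) * (w * x / (2 * (x - w)) *
              ((2 - bfu u w t) * bfu3 u x t - (2 - bfu u x t) * bfu3 u w t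
                - bfu1 u w t * bfu2 u x t + bfu1 u x t * bfu2 u w t))
          + 4 * (2 - bfu u x t) * (2 - bfu u y t) * bfu1 u w t := by
    intro w x y hw hx hy hxw hyw
    have step : ∀ k ∈ Finset.Icc 1 g, w ^ k * pd k (Qpol u x y) t
        = bfu1 u y t * (w ^ k * pd k (bfu1 u x) t)
          + bfu1 u x t * (w ^ k * pd k (bfu1 u y) t)
          + (-(bfu2 u y t) - 2 * (2 - bfu u y t) * (x⁻¹ + y⁻¹ + 2 * u 1 t)) *
              (w ^ k * pd k (bfu u x) t)
          + (-(bfu2 u x t) - 2 * (2 - bfu u x t) * (x⁻¹ + y⁻¹ + 2 * u 1 t)) *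
              (w ^ k * pd k (bfu u y) t)
          + (2 - bfu u x t) * (w ^ k * pd k (bfu2 u y) t)
          + (2 - bfu u y t) * (w ^ k * pd k (bfu2 u x) t)
          + (4 * (2 - bfu u x t) * (2 - bfu u y t)) * (w ^ k * pd k (u 1) t) := by
      intro k _
      rw [St17.pd_Qpol u hu k x y t]
      ring
    rw [Finset.sum_congr rfl step]
    rw [Finset.sum_add_distrib, Finset.sum_add_distrib, Finset.sum_add_distrib,
      Finset.sum_add_distrib, Finset.sum_add_distrib, Finset.sum_add_distrib,
      ← Finset.mul_sum, ← Finset.mul_sum, ← Finset.mul_sum, ← Finset.mul_sum,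
      ← Finset.mul_sum, ← Finset.mul_sum, ← Finset.mul_sum]
    rw [St17.key1 u hu hdkq t hx hw hxw, St17.key1 u hu hdkq t hy hw hyw,
      St17.key2 u hu hdkq t hx hw hxw, St17.key2 u hu hdkq t hy hw hyw,
      St17.key3 u hu hdkq t hx hw hxw, St17.key3 u hu hdkq t hy hw hyw,
      St17.key4 u hg hu hdkq t hw]
  have lhs_eq : ∀ (w x y : ℝ), ∑ i ∈ Finset.Icc 1 g, w ^ i * pd i (Ppol μ u x y) t
      = (-(x ^ 2 * y ^ 2 / (4 * (x - y) ^ 2))) *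
          ∑ k ∈ Finset.Icc 1 g, w ^ k * pd k (Qpol u x y) t := by
    intro w x y
    rw [Finset.mul_sum]
    apply Finset.sum_congr rfl
    intro k _
    rw [hPp x y k]
    ring
  rw [lhs_eq ζ ξ η, lhs_eq ξ ζ η, hSQ ζ ξ η hζ hξ hη hξζ hηζ,
    hSQ ξ ζ η hξ hζ hη (Ne.symm hξζ) (Ne.symm hξη)]
  have hD : ∀ x : ℝ, x ≠ 0 → bfu3 u x t
      = 4 * (x⁻¹ + u 1 t) * bfu1 u x t - 2 * pd 1 (u 1) t * (2 - bfu u x t) := by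
    intro x hx
    have := h4mu' t x hx
    linarith
  rw [hD ξ hξ, hD η hη, hD ζ hζ]
  exact St17.final_alg ξ η ζ (2 - bfu u ξ t) (2 - bfu u η t) (2 - bfu u ζ t)
    (bfu1 u ξ t) (bfu1 u η t) (bfu1 u ζ t)
    (bfu2 u ξ t) (bfu2 u η t) (bfu2 u ζ t)
    (u 1 t) (pd 1 (u 1) t) hξ hη hζ hξη hξζ hηζ
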